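/- arXiv:1510.08148 — 5 statements merged into one kernel-verified Lean document; each statement's English description precedes it below -/
import Mathlib

section
/- If S is an ideal of a commutative ring R and P is a prime ideal of the ring S, then ψ(P) = {x ∈ R : x·S ⊆ P} is a prime ideal of R that does not contain S. -/
/-- `I` is an ideal of the (possibly non-unital) commutative ring `S`,
where `S` is a subset of an ambient commutative ring `R`. -/
def IsIdealIn {R : Type*} [NonUnitalCommRing R] (S I : Set R) : Prop :=
  I ⊆ S ∧ (0 : R) ∈ I ∧ (∀ a ∈ I, ∀ b ∈ I, a + b ∈ I) ∧ (∀ a ∈ I, -a ∈ I) ∧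
    ∀ s ∈ S, ∀ a ∈ I, s * a ∈ I

/-- `S` is an ideal of the ambient commutative ring `R`. -/
def IsIdeal {R : Type*} [NonUnitalCommRing R] (S : Set R) : Prop :=
  IsIdealIn Set.univ S

/-- `P` is a prime ideal of the ring `S` (a proper ideal of `S` such that
`a * b ∈ P` implies `a ∈ P` or `b ∈ P` for `a, b ∈ S`). -/
def IsPrimeIn {R : Type*} [NonUnitalCommRing R] (S P : Set R) : Prop :=
  IsIdealIn S P ∧ P ≠ S ∧ ∀ a ∈ S, ∀ b ∈ S, a * b ∈ P → a ∈ P ∨ b ∈ P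

/-- `ψ(I) = {x ∈ R : x·S ⊆ I}`. -/
def psi {R : Type*} [NonUnitalCommRing R] (S I : Set R) : Set R :=
  {x : R | ∀ s ∈ S, x * s ∈ I}

/-- The kernel of `Spec S`, i.e. the intersection of all prime ideals of `S`
(which is the nilradical `N(S)` of `S`). -/
def NKset {R : Type*} [NonUnitalCommRing R] (S : Set R) : Set R :=
  ⋂ P ∈ {P : Set R | IsPrimeIn S P}, P

/-- If `S` is an ideal of a commutative ring `R` and `P` is a prime ideal of the ring `S`,
then `ψ(P) = {x ∈ R : x·S ⊆ P}` is a prime ideal of `R` not containing `S`. -/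
theorem psi_prime_not_contains {R : Type*} [NonUnitalCommRing R] {S P : Set R}
    (hS : IsIdeal S) (hP : IsPrimeIn S P) :
    IsPrimeIn (Set.univ : Set R) (psi S P) ∧ ¬ S ⊆ psi S P := by
  obtain ⟨⟨hPS, hP0, hPadd, hPneg, hPmul⟩, hPne, hprime⟩ := hP
  obtain ⟨-, -, -, -, hSmul⟩ := hS
  -- S is not contained in ψ(P)
  have hnot : ¬ S ⊆ psi S P := by
    intro h
    apply hPne
    apply Set.Subset.antisymm hPS
    intro a ha
    have haa : a * a ∈ P := h ha a ha
    rcases hprime a ha a ha haa with h' | h' <;> exact h'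
  refine ⟨⟨⟨?_, ?_, ?_, ?_, ?_⟩, ?_, ?_⟩, hnot⟩
  · exact Set.subset_univ _
  · intro s hs; simpa using hP0
  · intro a ha b hb s hs
    have := hPadd _ (ha s hs) _ (hb s hs)
    simpa [add_mul] using this
  · intro a ha s hs
    have := hPneg _ (ha s hs)
    simpa [neg_mul] using this
  · intro r _ a ha s hs
    have hrs : r * s ∈ S := hSmul r trivial s hs
    have := ha _ hrs
    have heq : r * a * s = a * (r * s) := by rw [mul_comm r a, mul_assoc]
    rw [heq]; exact this
  · intro h
    rcases Set.not_subset.1 hnot with ⟨s, hsS, hs⟩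
    exact hs (h ▸ trivial)
  · intro a _ b _ hab
    by_contra hc
    push_neg at hc
    obtain ⟨ha, hb⟩ := hc
    rcases Set.not_subset.1 ha with ⟨s, hs, has⟩
    rcases Set.not_subset.1 hb with ⟨t, ht, hbt⟩
    have hasS : a * s ∈ S := by simpa [mul_comm] using hSmul a trivial s hs
    have hbtS : b * t ∈ S := by simpa [mul_comm] using hSmul b trivial t ht
    have hst : s * t ∈ S := hSmul s trivial t ht
    have hmem : (a * s) * (b * t) ∈ P := by
      have := hab (s * t) hst
      have heq : (a * s) * (b * t) = (a * b) * (s * t) := mul_mul_mul_comm a s b t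
      rw [heq]; exact this
    rcases hprime _ hasS _ hbtS hmem with h' | h'
    · exact has h'
    · exact hbt h'
end

section
/- If S is an ideal of a commutative ring R and P, Q are prime ideals of S with ψ(P) = ψ(Q), then P = Q; i.e., the map ψ from prime ideals of S to prime ideals of R is injective. -/
lemma psi_inter_eq {R : Type*} [NonUnitalCommRing R] {S P : Set R}
    (hP : IsPrimeIn S P) : psi S P ∩ S = P := by
  obtain ⟨⟨hPS, -, -, -, hmul⟩, hne, hprime⟩ := hP
  ext x
  constructor
  · rintro ⟨hx, hxS⟩
    by_contra hxP
    apply hne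
    apply Set.Subset.antisymm hPS
    intro s hs
    rcases hprime x hxS s hs (hx s hs) with h | h
    · exact absurd h hxP
    · exact h
  · intro hx
    refine ⟨fun s hs => ?_, hPS hx⟩
    rw [mul_comm]
    exact hmul s hs x hx

/-- `ψ` is injective on prime ideals of `S`. -/
theorem psi_injective {R : Type*} [NonUnitalCommRing R] {S P Q : Set R}
    (hS : IsIdeal S) (hP : IsPrimeIn S P) (hQ : IsPrimeIn S Q)
    (h : psi S P = psi S Q) : P = Q := by
  rw [← psi_inter_eq hP, ← psi_inter_eq hQ, h]
end

section
/- If S is an ideal of a commutative ring R and Q is a prime ideal of R not containing S, then Q ∩ S is a prime ideal of the ring S and ψ(Q ∩ S) = Q. -/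
/-- If `Q` is a prime ideal of `R` not containing `S` then `Q ∩ S` is a prime ideal of
the ring `S` and `ψ(Q ∩ S) = Q`. -/
theorem inter_prime_and_psi {R : Type*} [NonUnitalCommRing R] {S Q : Set R}
    (hS : IsIdeal S) (hQ : IsPrimeIn (Set.univ : Set R) Q) (hns : ¬ S ⊆ Q) :
    IsPrimeIn S (Q ∩ S) ∧ psi S (Q ∩ S) = Q := by
  obtain ⟨_, hS0, hSadd, hSneg, hSmul⟩ := hS
  obtain ⟨⟨_, hQ0, hQadd, hQneg, hQmul⟩, hQne, hQprime⟩ := hQ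
  obtain ⟨s0, hs0S, hs0Q⟩ := Set.not_subset.mp hns
  have hmulQ : ∀ x : R, ∀ a ∈ Q, x * a ∈ Q := fun x a ha => hQmul x trivial a ha
  refine ⟨⟨⟨Set.inter_subset_right, ⟨hQ0, hS0⟩,
      fun a ha b hb => ⟨hQadd a ha.1 b hb.1, hSadd a ha.2 b hb.2⟩,
      fun a ha => ⟨hQneg a ha.1, hSneg a ha.2⟩,
      fun s hs a ha => ⟨hmulQ s a ha.1, hSmul s trivial a ha.2⟩⟩,
      fun h => hs0Q ((h.symm ▸ hs0S : s0 ∈ Q ∩ S).1),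
      fun a ha b hb hab => ?_⟩, ?_⟩
  · rcases hQprime a trivial b trivial hab.1 with h | h
    · exact Or.inl ⟨h, ha⟩
    · exact Or.inr ⟨h, hb⟩
  · ext x
    constructor
    · intro hx
      rcases hQprime x trivial s0 trivial (hx s0 hs0S).1 with h | h
      · exact h
      · exact absurd h hs0Q
    · intro hx s hs
      exact ⟨mul_comm x s ▸ hmulQ s x hx, hSmul x trivial s hs⟩
end

section
/- Let h : R → M be a ring homomorphism, let S be an ideal of R and T an ideal of M with h(S) = T. Then for every prime ideal P of T, h⁻¹(ψ_{(T,M)}(P)) = ψ_{(S,R)}(h⁻¹(P)). -/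
/-- If `h : R → M` is a ring homomorphism, `S` an ideal of `R`, `T` an ideal of `M`
with `h(S) = T`, then for every prime ideal `P` of `T`,
`h⁻¹(ψ_{(T,M)}(P)) = ψ_{(S,R)}(h⁻¹(P))`. -/
theorem preimage_psi {R M : Type*} [NonUnitalCommRing R] [NonUnitalCommRing M]
    (h : R →ₙ+* M) {S : Set R} {T : Set M} (hS : IsIdeal S) (hT : IsIdeal T)
    (himg : h '' S = T) {P : Set M} (hP : IsPrimeIn T P) :
    h ⁻¹' (psi T P) = psi S (h ⁻¹' P) := by
  ext x
  constructor
  · intro hx s hs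
    have : h s ∈ T := himg ▸ ⟨s, hs, rfl⟩
    simpa [Set.mem_preimage, map_mul] using hx (h s) this
  · intro hx t ht
    obtain ⟨s, hs, rfl⟩ := himg ▸ ht
    simpa [map_mul] using hx s hs
end

section
/- Let B be a Boolean ring without identity (every element idempotent, no multiplicative identity). In the unitalization U₀(B), the ideal ψ({0}) = {(a,α) ∈ U₀(B) : (a,α)·(B × {0}) ⊆ {0}} equals {0} × 2ℤ. -/
/-- Let `B` be a Boolean ring without identity. In the unitalization
`U₀(B) = B × ℤ` (Mathlib's `Unitization ℤ B`), the ideal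
`ψ({0}) = {z ∈ U₀(B) : z·(B × {0}) ⊆ {0}}` equals `{0} × 2ℤ`. -/
theorem boolean_psi_zero (B : Type*) [NonUnitalCommRing B]
    (hB : ∀ x : B, x * x = x) (h1 : ¬ ∃ e : B, ∀ x : B, e * x = x) :
    {z : Unitization ℤ B | ∀ b : B, z * (b : Unitization ℤ B) = 0} =
      {z : Unitization ℤ B | z.snd = 0 ∧ (2 : ℤ) ∣ z.fst} := by
  have h2 : ∀ x : B, x + x = 0 := by
    intro x
    have h := hB (x + x)
    rw [mul_add, add_mul, hB] at h
    have h3 : (x + x) + (x + x) = (x + x) + 0 := by rw [add_zero]; exact h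
    exact add_left_cancel h3
  have key : ∀ z : Unitization ℤ B, ∀ b : B,
      z * (b : Unitization ℤ B) = 0 ↔ z.fst • b + z.snd * b = 0 := by
    intro z b
    rw [Unitization.ext_iff]
    simp [Unitization.fst_mul, Unitization.snd_mul]
  ext z
  simp only [Set.mem_setOf_eq]
  constructor
  · intro hz
    rcases Int.even_or_odd z.fst with ⟨k, hk⟩ | ⟨k, hk⟩
    · have hzero : ∀ b : B, z.snd * b = 0 := by
        intro b
        have hb := (key z b).mp (hz b)
        have hs : z.fst • b = 0 := by
          rw [hk, add_smul]; exact h2 _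
        rwa [hs, zero_add] at hb
      have hsnd : z.snd = 0 := by
        have := hzero z.snd
        rwa [hB] at this
      exact ⟨hsnd, ⟨k, by omega⟩⟩
    · exfalso
      apply h1
      refine ⟨z.snd, fun b => ?_⟩
      have hb := (key z b).mp (hz b)
      have hs : z.fst • b = b := by
        rw [hk, add_smul, one_smul, mul_smul, two_smul, h2, zero_add]
      rw [hs] at hb
      have h4 : z.snd * b + b = 0 := by rw [add_comm]; exact hb
      have h5 : z.snd * b + b = b + b := by rw [h4, h2]
      exact add_right_cancel h5
  · rintro ⟨hs, k, hk⟩ b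
    rw [key, hs, zero_mul, add_zero, hk, mul_smul, two_smul, h2]
end
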